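/- Let α, γ : Fin 3 → ℍ be triples of imaginary quaternions (re(α a) = 0 and re(γ a) = 0 for all a). Then ∑_{a < b} (re(α a * γ b) − re(α b * γ a))^2 ≤ (∑_a ‖α a‖^2) · (∑_b ‖γ b‖^2). -/

import Mathlib

private lemma quat_norm_sq_eq (a : Quaternion ℝ) :
    ‖a‖ ^ 2 = a.re ^ 2 + a.imI ^ 2 + a.imJ ^ 2 + a.imK ^ 2 := by
  rw [sq, ← Quaternion.normSq_eq_norm_mul_self, Quaternion.normSq_def']

/-- For triples `α, γ` of imaginary quaternions,
`∑_{a<b} (re(α a γ b) − re(α b γ a))² ≤ (∑ ‖α a‖²)(∑ ‖γ b‖²)`. -/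
theorem su2_triple_real_part_bound (α γ : Fin 3 → Quaternion ℝ)
    (hα : ∀ a, (α a).re = 0) (hγ : ∀ a, (γ a).re = 0) :
    (∑ a : Fin 3, ∑ b ∈ Finset.univ.filter (fun b => a < b),
        ((α a * γ b).re - (α b * γ a).re) ^ 2)
      ≤ (∑ a : Fin 3, ‖α a‖ ^ 2) * (∑ b : Fin 3, ‖γ b‖ ^ 2) := by
  -- columns of the component matrices, packaged as imaginary quaternions
  set p1 : Quaternion ℝ := ⟨0, (α 0).imI, (α 1).imI, (α 2).imI⟩ with hp1
  set p2 : Quaternion ℝ := ⟨0, (α 0).imJ, (α 1).imJ, (α 2).imJ⟩ with hp2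
  set p3 : Quaternion ℝ := ⟨0, (α 0).imK, (α 1).imK, (α 2).imK⟩ with hp3
  set q1 : Quaternion ℝ := ⟨0, (γ 0).imI, (γ 1).imI, (γ 2).imI⟩ with hq1
  set q2 : Quaternion ℝ := ⟨0, (γ 0).imJ, (γ 1).imJ, (γ 2).imJ⟩ with hq2
  set q3 : Quaternion ℝ := ⟨0, (γ 0).imK, (γ 1).imK, (γ 2).imK⟩ with hq3
  set T : Quaternion ℝ := p1 * q1 + p2 * q2 + p3 * q3 with hT
  -- Step 1: the LHS equals the squared norm of the imaginary part of T
  have h1 : (∑ a : Fin 3, ∑ b ∈ Finset.univ.filter (fun b => a < b),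
        ((α a * γ b).re - (α b * γ a).re) ^ 2)
      = T.imI ^ 2 + T.imJ ^ 2 + T.imK ^ 2 := by
    have tI : T.imI = ((α 1).imI * (γ 2).imI - (α 2).imI * (γ 1).imI)
        + ((α 1).imJ * (γ 2).imJ - (α 2).imJ * (γ 1).imJ)
        + ((α 1).imK * (γ 2).imK - (α 2).imK * (γ 1).imK) := by
      simp only [hT, Quaternion.imI_add, Quaternion.imI_mul]
      simp only [hp1, hp2, hp3, hq1, hq2, hq3]
      ring
    have tJ : T.imJ = ((α 2).imI * (γ 0).imI - (α 0).imI * (γ 2).imI)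
        + ((α 2).imJ * (γ 0).imJ - (α 0).imJ * (γ 2).imJ)
        + ((α 2).imK * (γ 0).imK - (α 0).imK * (γ 2).imK) := by
      simp only [hT, Quaternion.imJ_add, Quaternion.imJ_mul]
      simp only [hp1, hp2, hp3, hq1, hq2, hq3]
      ring
    have tK : T.imK = ((α 0).imI * (γ 1).imI - (α 1).imI * (γ 0).imI)
        + ((α 0).imJ * (γ 1).imJ - (α 1).imJ * (γ 0).imJ)
        + ((α 0).imK * (γ 1).imK - (α 1).imK * (γ 0).imK) := by
      simp only [hT, Quaternion.imK_add, Quaternion.imK_mul]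
      simp only [hp1, hp2, hp3, hq1, hq2, hq3]
      ring
    have d01 : ((0 : Fin 3) < 1) = True := by decide
    have d02 : ((0 : Fin 3) < 2) = True := by decide
    have d12 : ((1 : Fin 3) < 2) = True := by decide
    have d10 : ((1 : Fin 3) < 0) = False := by decide
    have d20 : ((2 : Fin 3) < 0) = False := by decide
    have d21 : ((2 : Fin 3) < 1) = False := by decide
    have d00 : ((0 : Fin 3) < 0) = False := by decide
    have d11 : ((1 : Fin 3) < 1) = False := by decide
    have d22 : ((2 : Fin 3) < 2) = False := by decide
    simp only [Finset.sum_filter, Fin.sum_univ_three, d01, d02, d12, d10, d20, d21, d00, d11,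
      d22, if_true, if_false, Quaternion.re_mul, hα 0, hα 1, hα 2, hγ 0, hγ 1, hγ 2, tI, tJ, tK]
    ring
  have h2 : T.imI ^ 2 + T.imJ ^ 2 + T.imK ^ 2 ≤ ‖T‖ ^ 2 := by
    rw [quat_norm_sq_eq]; nlinarith [sq_nonneg T.re]
  have h3 : ‖T‖ ≤ ‖p1‖ * ‖q1‖ + ‖p2‖ * ‖q2‖ + ‖p3‖ * ‖q3‖ := by
    calc ‖T‖ ≤ ‖p1 * q1 + p2 * q2‖ + ‖p3 * q3‖ := norm_add_le _ _
      _ ≤ ‖p1 * q1‖ + ‖p2 * q2‖ + ‖p3 * q3‖ := by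
          gcongr; exact norm_add_le _ _
      _ = ‖p1‖ * ‖q1‖ + ‖p2‖ * ‖q2‖ + ‖p3‖ * ‖q3‖ := by
          simp [norm_mul]
  have h4 : ‖T‖ ^ 2 ≤ (‖p1‖ * ‖q1‖ + ‖p2‖ * ‖q2‖ + ‖p3‖ * ‖q3‖) ^ 2 := by
    have := norm_nonneg T
    nlinarith
  have h5 : (‖p1‖ * ‖q1‖ + ‖p2‖ * ‖q2‖ + ‖p3‖ * ‖q3‖) ^ 2
      ≤ (‖p1‖ ^ 2 + ‖p2‖ ^ 2 + ‖p3‖ ^ 2) * (‖q1‖ ^ 2 + ‖q2‖ ^ 2 + ‖q3‖ ^ 2) := by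
    nlinarith [sq_nonneg (‖p1‖ * ‖q2‖ - ‖p2‖ * ‖q1‖), sq_nonneg (‖p1‖ * ‖q3‖ - ‖p3‖ * ‖q1‖),
      sq_nonneg (‖p2‖ * ‖q3‖ - ‖p3‖ * ‖q2‖)]
  have h6 : (‖p1‖ ^ 2 + ‖p2‖ ^ 2 + ‖p3‖ ^ 2) * (‖q1‖ ^ 2 + ‖q2‖ ^ 2 + ‖q3‖ ^ 2)
      = (∑ a : Fin 3, ‖α a‖ ^ 2) * (∑ b : Fin 3, ‖γ b‖ ^ 2) := by
    simp only [Fin.sum_univ_three, quat_norm_sq_eq]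
    simp only [hp1, hp2, hp3, hq1, hq2, hq3,
      hα 0, hα 1, hα 2, hγ 0, hγ 1, hγ 2]
    ring
  linarith [h1, h2, h4, h5, h6.le, h6.ge]
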